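/- (Main Theorem) Let G be a connected locally finite simple graph on a countably infinite vertex set V, and let c be any conductance function on G. Then the graph Laplacian Δ_c, defined on the dense subspace of finitely supported functions in the Hilbert space ℓ²(V), is essentially selfadjoint: the adjoint of Δ_c equals the closure of Δ_c, so the closure of Δ_c is a selfadjoint operator in ℓ²(V). -/

import Mathlib

open scoped BigOperators

set_option linter.unusedSectionVars false
set_option maxHeartbeats 1000000

open scoped ComplexConjugate
open Function

namespace GraphESA

variable {V : Type*} [DecidableEq V] (G : SimpleGraph V) [DecidableRel G.Adj] [G.LocallyFinite]
  (c : V → V → ℝ)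

/-- pointwise graph Laplacian -/
noncomputable def lapl (f : V → ℂ) (x : V) : ℂ :=
  ∑ y ∈ G.neighborFinset x, (c x y : ℂ) * (f x - f y)

theorem conj_lapl (f : V → ℂ) (x : V) :
    conj (lapl G c f x) = lapl G c (fun y => conj (f y)) x := by
  rw [lapl, lapl, map_sum]
  refine Finset.sum_congr rfl fun y _ => ?_
  rw [map_mul, map_sub, Complex.conj_ofReal]

theorem lapl_re (f : V → ℂ) (x : V) :
    (lapl G c f x).re = ∑ y ∈ G.neighborFinset x, c x y * ((f x).re - (f y).re) := by
  rw [lapl, Complex.re_sum]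
  refine Finset.sum_congr rfl fun y _ => ?_
  rw [Complex.re_ofReal_mul, Complex.sub_re]

theorem lapl_im (f : V → ℂ) (x : V) :
    (lapl G c f x).im = ∑ y ∈ G.neighborFinset x, c x y * ((f x).im - (f y).im) := by
  rw [lapl, Complex.im_sum]
  refine Finset.sum_congr rfl fun y _ => ?_
  rw [Complex.mul_im, Complex.ofReal_re, Complex.ofReal_im, Complex.sub_im]
  ring

/-- maximum principle -/
theorem max_principle (hnn : ∀ x y, 0 ≤ c x y) (v : V → ℝ)
    (hfin : ∀ ε > 0, {x | ε ≤ v x}.Finite)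
    (heq : ∀ x, ∑ y ∈ G.neighborFinset x, c x y * (v x - v y) = - v x) :
    ∀ x, v x ≤ 0 := by
  by_contra h
  push_neg at h
  obtain ⟨x₀, hx₀⟩ := h
  have hA : {x | v x₀ ≤ v x}.Finite := hfin (v x₀) hx₀
  have hne : hA.toFinset.Nonempty := ⟨x₀, by simp⟩
  obtain ⟨x₁, hx₁A, hx₁max⟩ := hA.toFinset.exists_max_image v hne
  have hx₁ : v x₀ ≤ v x₁ := by simpa using hA.mem_toFinset.1 hx₁A
  have hmax : ∀ y, v y ≤ v x₁ := by
    intro y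
    by_cases hy : v x₀ ≤ v y
    · exact hx₁max y (by simpa using hy)
    · linarith [not_le.1 hy]
  have h1 : 0 ≤ ∑ y ∈ G.neighborFinset x₁, c x₁ y * (v x₁ - v y) :=
    Finset.sum_nonneg fun y _ => mul_nonneg (hnn _ _) (by linarith [hmax y])
  have h2 := heq x₁
  linarith

theorem single_support (x : V) (a : ℂ) :
    (Function.support (⇑(lp.single 2 x a : lp (fun _ : V => ℂ) 2))).Finite := by
  refine Set.Finite.subset (Set.finite_singleton x) ?_
  intro y hy
  simp only [Function.mem_support] at hy
  by_contra h
  exact hy (lp.single_apply_ne (E := fun _ : V => ℂ) 2 x a h)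

theorem dense_finsupp (D : Submodule ℂ (lp (fun _ : V => ℂ) 2))
    (hD : ∀ f, f ∈ D ↔ (Function.support (⇑f)).Finite) :
    Dense (D : Set (lp (fun _ : V => ℂ) 2)) := by
  rw [dense_iff_closure_eq, Set.eq_univ_iff_forall]
  intro f
  have hs := lp.hasSum_single (E := fun _ : V => ℂ) (p := 2) (by norm_num) f
  refine mem_closure_of_tendsto hs (Filter.Eventually.of_forall fun s => ?_)
  refine (hD _).2 ?_
  have hcoe : ⇑(∑ i ∈ s, lp.single 2 i (f i) : lp (fun _ : V => ℂ) 2)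
      = ∑ i ∈ s, ⇑(lp.single 2 i (f i) : lp (fun _ : V => ℂ) 2) := lp.coeFn_sum _ _
  rw [hcoe]
  refine Set.Finite.subset (Set.Finite.biUnion s.finite_toSet
    (fun i _ => single_support i (f i))) ?_
  intro z hz
  rw [Function.mem_support] at hz
  simp only [Finset.sum_apply] at hz
  obtain ⟨i, hi, hne⟩ := Finset.exists_ne_zero_of_sum_ne_zero hz
  exact Set.mem_biUnion hi hne

theorem inner_tsum' (f g : lp (fun _ : V => ℂ) 2) :
    (inner ℂ f g : ℂ) = ∑' x, conj (f x) * g x := by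
  rw [lp.inner_eq_tsum]; exact tsum_congr fun x => by simp only [RCLike.inner_apply]; ring

theorem inner_eq_sum (f g : lp (fun _ : V => ℂ) 2) (S : Finset V) (hg : ∀ x ∉ S, g x = 0) :
    (inner ℂ f g : ℂ) = ∑ x ∈ S, conj (f x) * g x := by
  rw [inner_tsum']
  exact tsum_eq_sum fun x hx => by rw [hg x hx, mul_zero]

theorem norm_fin (w : lp (fun _ : V => ℂ) 2) (ε : ℝ) (hε : 0 < ε) :
    {x | ε ≤ ‖w x‖}.Finite := by
  have hsum : Summable (fun x => ‖w x‖ ^ (2 : ℝ)) := by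
    have := (lp.memℓp w).summable (p := 2) (by norm_num)
    simpa using this
  have h := hsum.tendsto_cofinite_zero
  have h2 : ∀ᶠ x in Filter.cofinite, ‖w x‖ ^ (2:ℝ) < ε ^ (2:ℝ) :=
    h.eventually_lt_const (Real.rpow_pos_of_pos hε 2)
  refine (Filter.eventually_cofinite.1 h2).subset ?_
  intro x hx
  simp only [Set.mem_setOf_eq] at hx ⊢
  exact not_lt.2 (Real.rpow_le_rpow hε.le hx (by norm_num))

theorem swap_sum {M : Type*} [AddCommMonoid M] (S : Finset V) (t : V → V → M) :
    ∑ x ∈ S, ∑ y ∈ G.neighborFinset x ∩ S, t x y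
      = ∑ x ∈ S, ∑ y ∈ G.neighborFinset x ∩ S, t y x := by
  have h1 : ∀ x, G.neighborFinset x ∩ S = S.filter (fun y => G.Adj x y) := by
    intro x; ext y; simp [SimpleGraph.mem_neighborFinset, and_comm]
  simp only [h1, Finset.sum_filter]
  rw [Finset.sum_comm]
  refine Finset.sum_congr rfl fun x _ => Finset.sum_congr rfl fun y _ => ?_
  congr 1
  simp [G.adj_comm]

theorem key_swap (hsym : ∀ x y, c x y = c y x) (S : Finset V) (A B : V → ℂ)
    (hB : ∀ y ∉ S, B y = 0) (hA : ∀ y ∉ S, A y = 0) :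
    ∑ x ∈ S, ∑ y ∈ G.neighborFinset x, (c x y : ℂ) * (A x * B y)
      = ∑ x ∈ S, ∑ y ∈ G.neighborFinset x, (c x y : ℂ) * (B x * A y) := by
  have loc : ∀ (A B : V → ℂ), (∀ y ∉ S, B y = 0) →
      ∑ x ∈ S, ∑ y ∈ G.neighborFinset x, (c x y : ℂ) * (A x * B y)
        = ∑ x ∈ S, ∑ y ∈ G.neighborFinset x ∩ S, (c x y : ℂ) * (A x * B y) := by
    intro A B hB
    refine Finset.sum_congr rfl fun x _ => (Finset.sum_subset Finset.inter_subset_left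
      fun y _ hy => ?_).symm
    have : y ∉ S := fun hyS => hy (Finset.mem_inter.2 ⟨‹y ∈ G.neighborFinset x›, hyS⟩)
    rw [hB y this, mul_zero, mul_zero]
  rw [loc A B hB, loc B A hA, swap_sum G S (fun x y => (c x y : ℂ) * (A x * B y))]
  refine Finset.sum_congr rfl fun x _ => Finset.sum_congr rfl fun y _ => ?_
  rw [hsym y x]
  ring

theorem green_sym (hsym : ∀ x y, c x y = c y x) (F Gf : V → ℂ)
    (hF : (support F).Finite) (hG : (support Gf).Finite) :
    ∑' x, F x * lapl G c Gf x = ∑' x, Gf x * lapl G c F x := by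
  classical
  set S := hF.toFinset ∪ hG.toFinset with hS
  have hFS : ∀ x ∉ S, F x = 0 := fun x hx => by
    by_contra h; exact hx (Finset.mem_union.2 (Or.inl (by simpa using h)))
  have hGS : ∀ x ∉ S, Gf x = 0 := fun x hx => by
    by_contra h; exact hx (Finset.mem_union.2 (Or.inr (by simpa using h)))
  have e1 : ∑' x, F x * lapl G c Gf x = ∑ x ∈ S, F x * lapl G c Gf x :=
    tsum_eq_sum fun x hx => by rw [hFS x hx, zero_mul]
  have e2 : ∑' x, Gf x * lapl G c F x = ∑ x ∈ S, Gf x * lapl G c F x :=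
    tsum_eq_sum fun x hx => by rw [hGS x hx, zero_mul]
  rw [e1, e2]
  have expand : ∀ (A B : V → ℂ), ∑ x ∈ S, A x * lapl G c B x
      = (∑ x ∈ S, ∑ y ∈ G.neighborFinset x, (c x y : ℂ) * (A x * B x))
        - ∑ x ∈ S, ∑ y ∈ G.neighborFinset x, (c x y : ℂ) * (A x * B y) := by
    intro A B
    rw [← Finset.sum_sub_distrib]
    refine Finset.sum_congr rfl fun x _ => ?_
    rw [lapl, Finset.mul_sum, ← Finset.sum_sub_distrib]
    refine Finset.sum_congr rfl fun y _ => by ring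
  rw [expand, expand, key_swap G c hsym S F Gf hGS hFS]
  congr 1
  refine Finset.sum_congr rfl fun x _ => Finset.sum_congr rfl fun y _ => by ring

theorem green_pos (hsym : ∀ x y, c x y = c y x) (hnn : ∀ x y, 0 ≤ c x y) (F : V → ℂ)
    (hF : (support F).Finite) :
    0 ≤ (∑' x, conj (F x) * lapl G c F x).re := by
  classical
  set S := hF.toFinset with hS
  have hFS : ∀ x ∉ S, F x = 0 := fun x hx => by
    by_contra h; exact hx (by simpa [hS] using h)
  have e1 : ∑' x, conj (F x) * lapl G c F x = ∑ x ∈ S, conj (F x) * lapl G c F x :=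
    tsum_eq_sum fun x hx => by rw [hFS x hx, map_zero, zero_mul]
  rw [e1]
  have expand : ∑ x ∈ S, conj (F x) * lapl G c F x
      = ∑ x ∈ S, ∑ y ∈ G.neighborFinset x, (c x y : ℂ) * (conj (F x) * (F x - F y)) := by
    refine Finset.sum_congr rfl fun x _ => ?_
    rw [lapl, Finset.mul_sum]
    exact Finset.sum_congr rfl fun y _ => by ring
  rw [expand]
  -- real part of sums
  rw [Complex.re_sum]
  have hre : ∀ x ∈ S, (∑ y ∈ G.neighborFinset x, (c x y : ℂ) * (conj (F x) * (F x - F y))).re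
      = ∑ y ∈ G.neighborFinset x, c x y * (conj (F x) * (F x - F y)).re := by
    intro x _
    rw [Complex.re_sum]
    exact Finset.sum_congr rfl fun y _ => by
      rw [Complex.re_ofReal_mul]
  rw [Finset.sum_congr rfl hre]
  -- split each inner sum into y ∈ S and y ∉ S
  have split : ∀ x ∈ S, ∑ y ∈ G.neighborFinset x, c x y * (conj (F x) * (F x - F y)).re
      = (∑ y ∈ G.neighborFinset x ∩ S, c x y * (conj (F x) * (F x - F y)).re)
        + ∑ y ∈ G.neighborFinset x \ S, c x y * (conj (F x) * (F x - F y)).re := by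
    intro x _
    rw [← Finset.sum_inter_add_sum_sdiff]
  rw [Finset.sum_congr rfl split, Finset.sum_add_distrib]
  have h2 : 0 ≤ ∑ x ∈ S, ∑ y ∈ G.neighborFinset x \ S, c x y * (conj (F x) * (F x - F y)).re := by
    refine Finset.sum_nonneg fun x _ => Finset.sum_nonneg fun y hy => ?_
    have hyS : y ∉ S := (Finset.mem_sdiff.1 hy).2
    rw [hFS y hyS, sub_zero, Complex.conj_mul', ← Complex.ofReal_pow, Complex.ofReal_re]
    exact mul_nonneg (hnn x y) (by positivity)
  have h1 : 0 ≤ ∑ x ∈ S, ∑ y ∈ G.neighborFinset x ∩ S, c x y * (conj (F x) * (F x - F y)).re := by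
    set Q := ∑ x ∈ S, ∑ y ∈ G.neighborFinset x ∩ S, c x y * (conj (F x) * (F x - F y)).re with hQ
    have hswap : Q = ∑ x ∈ S, ∑ y ∈ G.neighborFinset x ∩ S, c y x * (conj (F y) * (F y - F x)).re :=
      swap_sum G S _
    have hdouble : Q + Q = ∑ x ∈ S, ∑ y ∈ G.neighborFinset x ∩ S,
        c x y * Complex.normSq (F x - F y) := by
      nth_rewrite 2 [hswap]
      rw [hQ, ← Finset.sum_add_distrib]
      refine Finset.sum_congr rfl fun x _ => ?_
      rw [← Finset.sum_add_distrib]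
      refine Finset.sum_congr rfl fun y _ => ?_
      rw [← hsym x y]
      have : (conj (F x) * (F x - F y)).re + (conj (F y) * (F y - F x)).re
          = Complex.normSq (F x - F y) := by
        rw [← Complex.add_re]
        have : conj (F x) * (F x - F y) + conj (F y) * (F y - F x)
            = conj (F x - F y) * (F x - F y) := by ring_nf; rw [map_sub]; ring
        rw [this, Complex.conj_mul', ← Complex.ofReal_pow, Complex.ofReal_re, Complex.normSq_eq_norm_sq]
      rw [← this]
      ring
    have : 0 ≤ Q + Q := hdouble ▸ Finset.sum_nonneg fun x _ => Finset.sum_nonneg fun y _ =>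
      mul_nonneg (hnn x y) (Complex.normSq_nonneg _)
    linarith
  exact add_nonneg h1 h2

end GraphESA

namespace GraphESA


theorem adjoint_isClosed {E F : Type*} [NormedAddCommGroup E] [InnerProductSpace ℂ E]
    [NormedAddCommGroup F] [InnerProductSpace ℂ F] [CompleteSpace E]
    (T : E →ₗ.[ℂ] F) (hdense : Dense (T.domain : Set E)) : T.adjoint.IsClosed := by
  have hgraph : (T.adjoint.graph : Set (F × E)) =
      ⋂ u : T.domain, {p : F × E | (inner ℂ p.2 (u : E) : ℂ) = inner ℂ p.1 (T u)} := by
    ext p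
    simp only [Set.mem_iInter, Set.mem_setOf_eq, SetLike.mem_coe]
    constructor
    · rintro hp u
      rw [LinearPMap.mem_graph_iff] at hp
      obtain ⟨y, hy1, hy2⟩ := hp
      rw [← hy2, ← hy1]
      exact LinearPMap.adjoint_isFormalAdjoint hdense y u
    · intro hp
      have hmem : p.1 ∈ T.adjoint.domain :=
        LinearPMap.mem_adjoint_domain_of_exists _ ⟨p.2, fun u => hp u⟩
      have happ : T.adjoint ⟨p.1, hmem⟩ = p.2 :=
        LinearPMap.adjoint_apply_eq hdense _ (fun u => hp u)
      rw [LinearPMap.mem_graph_iff]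
      exact ⟨⟨p.1, hmem⟩, rfl, happ⟩
  rw [LinearPMap.IsClosed, hgraph]
  exact isClosed_iInter fun u => isClosed_eq
    (continuous_snd.inner continuous_const) (continuous_fst.inner continuous_const)

theorem closure_eq_of_isClosed {E F : Type*} [NormedAddCommGroup E] [NormedSpace ℂ E]
    [NormedAddCommGroup F] [NormedSpace ℂ F]
    (f : E →ₗ.[ℂ] F) (hf : f.IsClosed) : f.closure = f :=
  hf.isClosable.existsUnique.unique hf.isClosable.graph_closure_eq_closure_graph
    hf.submodule_topologicalClosure_eq

end GraphESA
open GraphESA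

/-- Main Theorem: the graph Laplacian of a connected locally finite simple graph on a countably
infinite vertex set, with any conductance function, defined on the finitely supported functions
in `ℓ²(V)`, is essentially selfadjoint: its adjoint equals its closure. -/
theorem graphLaplacian_essentially_selfadjoint {V : Type*} [Countable V] [Infinite V]
    (G : SimpleGraph V) [DecidableRel G.Adj] [G.LocallyFinite]
    (hconn : G.Connected) (c : V → V → ℝ)
    (hsymm : ∀ x y, c x y = c y x)
    (hpos : ∀ x y, G.Adj x y → 0 < c x y)
    (hzero : ∀ x y, ¬ G.Adj x y → c x y = 0)
    (T : lp (fun _ : V => ℂ) 2 →ₗ.[ℂ] lp (fun _ : V => ℂ) 2)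
    (hdom : ∀ f : lp (fun _ : V => ℂ) 2, f ∈ T.domain ↔ (Function.support (⇑f)).Finite)
    (haction : ∀ u : T.domain, ∀ x : V,
      (T u : lp (fun _ : V => ℂ) 2) x
        = ∑ y ∈ G.neighborFinset x, (c x y : ℂ) * ((u : lp (fun _ : V => ℂ) 2) x
            - (u : lp (fun _ : V => ℂ) 2) y)) :
    T.adjoint = T.closure := by
  classical
  have hnn : ∀ x y, 0 ≤ c x y := fun x y => by
    by_cases h : G.Adj x y
    · exact (hpos x y h).le
    · exact (hzero x y h).ge
  have hdense : Dense (T.domain : Set (lp (fun _ : V => ℂ) 2)) := dense_finsupp T.domain hdom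
  have hsupp : ∀ u : T.domain, (support (⇑(↑u : lp (fun _ : V => ℂ) 2))).Finite :=
    fun u => (hdom _).1 u.2
  have hsuppc : ∀ u : T.domain,
      (support (fun x => conj ((↑u : lp (fun _ : V => ℂ) 2) x))).Finite := fun u =>
    (hsupp u).subset fun x hx => by
      simp only [mem_support] at hx ⊢
      exact fun h0 => hx (by rw [h0, map_zero])
  -- symmetry
  have hfa : T.IsFormalAdjoint T := by
    intro u v
    rw [inner_tsum', inner_tsum']
    calc ∑' x, conj ((T u) x) * (↑v : lp (fun _ : V => ℂ) 2) x
        = ∑' x, (⇑(↑v : lp (fun _ : V => ℂ) 2)) x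
            * lapl G c (fun y => conj ((↑u : lp (fun _ : V => ℂ) 2) y)) x := by
          refine tsum_congr fun x => ?_
          rw [haction u x]
          rw [show (∑ y ∈ G.neighborFinset x, (c x y : ℂ)
              * ((↑u : lp (fun _ : V => ℂ) 2) x - (↑u : lp (fun _ : V => ℂ) 2) y))
            = lapl G c (⇑(↑u : lp (fun _ : V => ℂ) 2)) x from rfl, conj_lapl]
          ring
      _ = ∑' x, (fun y => conj ((↑u : lp (fun _ : V => ℂ) 2) y)) x
            * lapl G c (⇑(↑v : lp (fun _ : V => ℂ) 2)) x :=
          green_sym G c hsymm _ _ (hsupp v) (hsuppc u)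
      _ = ∑' x, conj ((↑u : lp (fun _ : V => ℂ) 2) x) * (T v) x := by
          refine tsum_congr fun x => ?_
          rw [haction v x]
          rfl
  have hTle : T ≤ T.adjoint := hfa.le_adjoint hdense
  have hadj_closed : T.adjoint.IsClosed := adjoint_isClosed T hdense
  have hclosable : T.IsClosable :=
    LinearPMap.isClosable_iff_exists_closed_extension.2 ⟨T.adjoint, hadj_closed, hTle⟩
  have hclose_le : T.closure ≤ T.adjoint := by
    have h := LinearPMap.IsClosable.closure_mono hadj_closed.isClosable hTle
    rwa [closure_eq_of_isClosed _ hadj_closed] at h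
  -- pointwise formula for the adjoint
  have hadj_pt : ∀ (u : T.adjoint.domain) (x : V),
      (T.adjoint u : lp (fun _ : V => ℂ) 2) x
        = lapl G c (⇑(↑u : lp (fun _ : V => ℂ) 2)) x := by
    intro u x
    have hδdom : (lp.single 2 x 1 : lp (fun _ : V => ℂ) 2) ∈ T.domain :=
      (hdom _).2 (single_support x 1)
    set δ : T.domain := ⟨lp.single 2 x 1, hδdom⟩ with hδ
    have h1 := LinearPMap.adjoint_isFormalAdjoint hdense u δ
    have hδx : (↑δ : lp (fun _ : V => ℂ) 2) x = 1 := lp.single_apply_self 2 x 1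
    have hδne : ∀ z ≠ x, (↑δ : lp (fun _ : V => ℂ) 2) z = 0 :=
      fun z hz => lp.single_apply_ne 2 x 1 hz
    have h2 : (inner ℂ (T.adjoint u) (↑δ : lp (fun _ : V => ℂ) 2) : ℂ)
        = conj ((T.adjoint u : lp (fun _ : V => ℂ) 2) x) := by
      rw [inner_eq_sum _ _ {x} (fun z hz => hδne z (by simpa using hz))]
      rw [Finset.sum_singleton, hδx, mul_one]
    have h3 : (inner ℂ (↑u : lp (fun _ : V => ℂ) 2) (T δ) : ℂ)
        = conj (lapl G c (⇑(↑u : lp (fun _ : V => ℂ) 2)) x) := by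
      have hvan : ∀ z ∉ insert x (G.neighborFinset x),
          (T δ : lp (fun _ : V => ℂ) 2) z = 0 := by
        intro z hz
        simp only [Finset.mem_insert, SimpleGraph.mem_neighborFinset] at hz
        push_neg at hz
        rw [haction]
        refine Finset.sum_eq_zero fun y hy => ?_
        have hyx : y ≠ x := by
          rintro rfl
          rw [SimpleGraph.mem_neighborFinset] at hy
          exact hz.2 hy.symm
        rw [hδne z hz.1, hδne y hyx, sub_zero, mul_zero]
      rw [inner_eq_sum _ _ (insert x (G.neighborFinset x)) hvan,
        Finset.sum_insert (by simp [SimpleGraph.mem_neighborFinset])]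
      have hTδx : (T δ : lp (fun _ : V => ℂ) 2) x = ∑ y ∈ G.neighborFinset x, (c x y : ℂ) := by
        rw [haction]
        refine Finset.sum_congr rfl fun y hy => ?_
        have hyx : y ≠ x := by
          rw [SimpleGraph.mem_neighborFinset] at hy
          exact hy.ne'
        rw [hδx, hδne y hyx, sub_zero, mul_one]
      have hTδz : ∀ z ∈ G.neighborFinset x,
          (T δ : lp (fun _ : V => ℂ) 2) z = -(c z x : ℂ) := by
        intro z hz
        rw [SimpleGraph.mem_neighborFinset] at hz
        have hzx : z ≠ x := hz.ne'
        have hxz : x ∈ G.neighborFinset z := by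
          rw [SimpleGraph.mem_neighborFinset]; exact hz.symm
        rw [haction]
        rw [Finset.sum_eq_single_of_mem x hxz (fun y hy hyx => by
          rw [hδne z hzx, hδne y hyx, sub_zero, mul_zero])]
        rw [hδne z hzx, hδx]
        ring
      have hsum2 : ∑ z ∈ G.neighborFinset x,
          conj ((↑u : lp (fun _ : V => ℂ) 2) z) * (T δ : lp (fun _ : V => ℂ) 2) z
          = ∑ z ∈ G.neighborFinset x,
            conj ((↑u : lp (fun _ : V => ℂ) 2) z) * (-(c z x : ℂ)) :=
        Finset.sum_congr rfl fun z hz => by rw [hTδz z hz]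
      rw [hTδx, hsum2, conj_lapl, lapl, Finset.mul_sum, ← Finset.sum_add_distrib]
      refine Finset.sum_congr rfl fun y hy => ?_
      rw [hsymm y x]
      ring
    rw [h2, h3] at h1
    have := congrArg (starRingEnd ℂ) h1
    simpa using this
  -- kernel of (adjoint + 1) is trivial, via maximum principle
  have hker : ∀ w : lp (fun _ : V => ℂ) 2,
      (∀ x, lapl G c (⇑w) x = - w x) → w = 0 := by
    intro w hw
    have main : ∀ v : V → ℝ, (∀ x, |v x| ≤ ‖w x‖) →
        (∀ x, ∑ y ∈ G.neighborFinset x, c x y * (v x - v y) = - v x) → ∀ x, v x ≤ 0 := by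
      intro v hle heq
      refine max_principle G c hnn v (fun ε hε => ?_) heq
      refine (norm_fin w ε hε).subset ?_
      intro x hx
      exact le_trans (le_trans hx (le_abs_self _)) (hle x)
    have hre : ∀ x, ∑ y ∈ G.neighborFinset x, c x y * ((w x).re - (w y).re) = - (w x).re := by
      intro x
      rw [← lapl_re, hw x, Complex.neg_re]
    have him : ∀ x, ∑ y ∈ G.neighborFinset x, c x y * ((w x).im - (w y).im) = - (w x).im := by
      intro x
      rw [← lapl_im, hw x, Complex.neg_im]
    have h1 := main (fun x => (w x).re)
      (fun x => by simpa using Complex.abs_re_le_norm (w x)) hre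
    have h2 := main (fun x => -(w x).re)
      (fun x => by simpa using Complex.abs_re_le_norm (w x)) (fun x => by
        have : ∀ y ∈ G.neighborFinset x, c x y * (-(w x).re - -(w y).re)
            = -(c x y * ((w x).re - (w y).re)) := fun y _ => by ring
        rw [Finset.sum_congr rfl this, Finset.sum_neg_distrib, hre x])
    have h3 := main (fun x => (w x).im)
      (fun x => by simpa using Complex.abs_im_le_norm (w x)) him
    have h4 := main (fun x => -(w x).im)
      (fun x => by simpa using Complex.abs_im_le_norm (w x)) (fun x => by
        have : ∀ y ∈ G.neighborFinset x, c x y * (-(w x).im - -(w y).im)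
            = -(c x y * ((w x).im - (w y).im)) := fun y _ => by ring
        rw [Finset.sum_congr rfl this, Finset.sum_neg_distrib, him x])
    apply lp.ext
    funext x
    rw [lp.coeFn_zero, Pi.zero_apply]
    have e1 := h1 x
    have e2 := h2 x
    have e3 := h3 x
    have e4 := h4 x
    simp only at e2 e4
    apply Complex.ext
    · simp only [Complex.zero_re]; linarith
    · simp only [Complex.zero_im]; linarith
  -- positivity and norm bound on the domain
  have hbound : ∀ u : T.domain,
      ‖(↑u : lp (fun _ : V => ℂ) 2)‖ ≤ ‖T u + (↑u : lp (fun _ : V => ℂ) 2)‖ := by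
    intro u
    have hip : 0 ≤ (inner ℂ (↑u : lp (fun _ : V => ℂ) 2) (T u) : ℂ).re := by
      have heq : (inner ℂ (↑u : lp (fun _ : V => ℂ) 2) (T u) : ℂ)
          = ∑' x, conj ((↑u : lp (fun _ : V => ℂ) 2) x)
              * lapl G c (⇑(↑u : lp (fun _ : V => ℂ) 2)) x := by
        rw [inner_tsum']
        refine tsum_congr fun x => ?_
        rw [haction u x]
        rfl
      rw [heq]
      exact green_pos G c hsymm hnn _ (hsupp u)
    have hip2 : 0 ≤ (inner ℂ (T u) (↑u : lp (fun _ : V => ℂ) 2) : ℂ).re := by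
      have hcs := inner_conj_symm (𝕜 := ℂ) (T u) (↑u : lp (fun _ : V => ℂ) 2)
      rw [← hcs, Complex.conj_re]
      exact hip
    have hsq : ‖(↑u : lp (fun _ : V => ℂ) 2)‖ ^ 2 ≤ ‖T u + (↑u : lp (fun _ : V => ℂ) 2)‖ ^ 2 := by
      rw [norm_add_sq (𝕜 := ℂ)]
      have hre : RCLike.re (inner ℂ (T u) (↑u : lp (fun _ : V => ℂ) 2) : ℂ)
          = (inner ℂ (T u) (↑u : lp (fun _ : V => ℂ) 2) : ℂ).re := rfl
      nlinarith [norm_nonneg (T u), hip2, hre]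
    nlinarith [norm_nonneg (T u + (↑u : lp (fun _ : V => ℂ) 2)),
      norm_nonneg (↑u : lp (fun _ : V => ℂ) 2), hsq]
  -- the bound passes to the closure
  have hbound_cl : ∀ v : T.closure.domain,
      ‖(↑v : lp (fun _ : V => ℂ) 2)‖ ≤ ‖T.closure v + (↑v : lp (fun _ : V => ℂ) 2)‖ := by
    intro v
    have hgr := T.closure.mem_graph v
    have hsub : (T.closure.graph : Set (lp (fun _ : V => ℂ) 2 × lp (fun _ : V => ℂ) 2))
        ⊆ {p : lp (fun _ : V => ℂ) 2 × lp (fun _ : V => ℂ) 2 | ‖p.1‖ ≤ ‖p.2 + p.1‖} := by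
      rw [← hclosable.graph_closure_eq_closure_graph]
      intro p hp
      have hp' : p ∈ closure (T.graph : Set (lp (fun _ : V => ℂ) 2 × lp (fun _ : V => ℂ) 2)) := by
        rwa [← Submodule.topologicalClosure_coe, SetLike.mem_coe]
      have hC : IsClosed {p : lp (fun _ : V => ℂ) 2 × lp (fun _ : V => ℂ) 2 | ‖p.1‖ ≤ ‖p.2 + p.1‖} :=
        isClosed_le continuous_fst.norm (continuous_snd.add continuous_fst).norm
      refine closure_minimal ?_ hC hp'
      rintro q hq
      rw [SetLike.mem_coe, LinearPMap.mem_graph_iff] at hq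
      obtain ⟨y, hy1, hy2⟩ := hq
      simp only [Set.mem_setOf_eq]
      rw [← hy1, ← hy2]
      exact hbound y
    have hmemset := hsub (SetLike.mem_coe.mpr hgr)
    simpa using hmemset
  -- range of T + 1 is dense
  have hR : (LinearMap.range (T.toFun + T.domain.subtype))ᗮ = ⊥ := by
    rw [Submodule.eq_bot_iff]
    intro z hz
    have hz' : ∀ u : T.domain, (inner ℂ z (T u + (↑u : lp (fun _ : V => ℂ) 2)) : ℂ) = 0 := by
      intro u
      have h0 : (inner ℂ (T u + (↑u : lp (fun _ : V => ℂ) 2)) z : ℂ) = 0 :=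
        (Submodule.mem_orthogonal _ z).1 hz _ ⟨u, rfl⟩
      rw [← inner_conj_symm, h0, map_zero]
    have hz2 : ∀ u : T.domain, (inner ℂ (-z) (↑u : lp (fun _ : V => ℂ) 2) : ℂ) = inner ℂ z (T u) := by
      intro u
      have := hz' u
      rw [inner_add_right] at this
      rw [inner_neg_left]
      linear_combination -this
    have hmem : z ∈ T.adjoint.domain :=
      LinearPMap.mem_adjoint_domain_of_exists _ ⟨-z, hz2⟩
    have happ : T.adjoint ⟨z, hmem⟩ = -z :=
      LinearPMap.adjoint_apply_eq hdense _ hz2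
    have hpt : ∀ x, lapl G c (⇑z) x = - z x := by
      intro x
      have h := hadj_pt ⟨z, hmem⟩ x
      rw [happ] at h
      rw [← h, lp.coeFn_neg, Pi.neg_apply]
    exact hker z hpt
  have hRtop : (LinearMap.range (T.toFun + T.domain.subtype)).topologicalClosure = ⊤ :=
    Submodule.topologicalClosure_eq_top_iff.2 hR
  -- the main claim
  have claim : ∀ u : T.adjoint.domain, ∃ hd : (↑u : lp (fun _ : V => ℂ) 2) ∈ T.closure.domain,
      T.closure ⟨(↑u : lp (fun _ : V => ℂ) 2), hd⟩ = T.adjoint u := by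
    intro u
    set z : lp (fun _ : V => ℂ) 2 := T.adjoint u + ↑u with hzdef
    have hzcl : z ∈ closure ((LinearMap.range (T.toFun + T.domain.subtype) :
        Submodule ℂ (lp (fun _ : V => ℂ) 2)) : Set (lp (fun _ : V => ℂ) 2)) := by
      rw [← Submodule.topologicalClosure_coe, hRtop]
      trivial
    obtain ⟨sq, hsq_mem, hsq_lim⟩ := mem_closure_iff_seq_limit.1 hzcl
    choose f hf using hsq_mem
    have hfs : ∀ n, T.toFun (f n) + (↑(f n) : lp (fun _ : V => ℂ) 2) = sq n := by
      intro n
      have := hf n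
      rwa [LinearMap.add_apply, Submodule.subtype_apply] at this
    have hc : CauchySeq (fun n => (↑(f n) : lp (fun _ : V => ℂ) 2)) := by
      rw [Metric.cauchySeq_iff]
      have h1 := hsq_lim.cauchySeq
      rw [Metric.cauchySeq_iff] at h1
      intro ε hε
      obtain ⟨N, hN⟩ := h1 ε hε
      refine ⟨N, fun m hm n hn => ?_⟩
      have hb := hbound (f m - f n)
      rw [LinearPMap.map_sub] at hb
      have hco : ((↑(f m - f n) : lp (fun _ : V => ℂ) 2))
          = (↑(f m) : lp (fun _ : V => ℂ) 2) - ↑(f n) := rfl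
      rw [hco] at hb
      have heq2 : T (f m) - T (f n) + ((↑(f m) : lp (fun _ : V => ℂ) 2) - ↑(f n))
          = sq m - sq n := by
        rw [← hfs m, ← hfs n]
        show T.toFun (f m) - T.toFun (f n) + _ = _
        abel
      rw [dist_eq_norm]
      calc ‖(↑(f m) : lp (fun _ : V => ℂ) 2) - ↑(f n)‖
          ≤ ‖T (f m) - T (f n) + ((↑(f m) : lp (fun _ : V => ℂ) 2) - ↑(f n))‖ := hb
        _ = ‖sq m - sq n‖ := by rw [heq2]
        _ < ε := by
            have := hN m hm n hn
            rwa [dist_eq_norm] at this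
    obtain ⟨v, hv⟩ := cauchySeq_tendsto_of_complete hc
    have hTlim : Filter.Tendsto (fun n => T.toFun (f n)) Filter.atTop (nhds (z - v)) := by
      have hfn : (fun n => T.toFun (f n)) = fun n => sq n - ↑(f n) := by
        funext n
        rw [← hfs n]
        abel
      rw [hfn]
      exact hsq_lim.sub hv
    have hgr2 : (v, z - v) ∈ T.closure.graph := by
      rw [← hclosable.graph_closure_eq_closure_graph]
      have htend : Filter.Tendsto (fun n => ((↑(f n) : lp (fun _ : V => ℂ) 2), T.toFun (f n)))
          Filter.atTop (nhds (v, z - v)) := hv.prodMk_nhds hTlim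
      have hmem2 : ∀ n, ((↑(f n) : lp (fun _ : V => ℂ) 2), T.toFun (f n))
          ∈ (T.graph : Set (lp (fun _ : V => ℂ) 2 × lp (fun _ : V => ℂ) 2)) := fun n => by
        rw [SetLike.mem_coe]
        exact T.mem_graph (f n)
      have hcl2 : (v, z - v) ∈ closure (T.graph : Set (lp (fun _ : V => ℂ) 2 × lp (fun _ : V => ℂ) 2)) :=
        mem_closure_of_tendsto htend (Filter.Eventually.of_forall hmem2)
      rwa [← SetLike.mem_coe, Submodule.topologicalClosure_coe]
    rw [LinearPMap.mem_graph_iff] at hgr2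
    obtain ⟨y, hy1, hy2⟩ := hgr2
    have hy1' : (↑y : lp (fun _ : V => ℂ) 2) = v := hy1
    have hy2' : T.closure y = z - v := hy2
    have hvadj : (↑y : lp (fun _ : V => ℂ) 2) ∈ T.adjoint.domain := hclose_le.1 y.2
    have hvadj_val : T.adjoint ⟨↑y, hvadj⟩ = z - v := by
      rw [← hclose_le.2 (x := y) (y := ⟨↑y, hvadj⟩) rfl, hy2']
    set d : T.adjoint.domain := u - ⟨↑y, hvadj⟩ with hddef
    have hdcoe : (↑d : lp (fun _ : V => ℂ) 2) = ↑u - v := by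
      rw [hddef]
      show (↑u : lp (fun _ : V => ℂ) 2) - ↑y = _
      rw [hy1']
    have hd_val : T.adjoint d = -(↑d : lp (fun _ : V => ℂ) 2) := by
      rw [hddef, LinearPMap.map_sub, hvadj_val, hdcoe]
      have hu_val : T.adjoint u = z - ↑u := eq_sub_of_add_eq hzdef.symm
      rw [hu_val]
      abel
    have hd0 : (↑d : lp (fun _ : V => ℂ) 2) = 0 := by
      refine hker _ fun x => ?_
      have h := hadj_pt d x
      rw [hd_val] at h
      rw [← h, lp.coeFn_neg, Pi.neg_apply]
    have hueq : (↑u : lp (fun _ : V => ℂ) 2) = v := by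
      rw [hdcoe] at hd0
      exact sub_eq_zero.1 hd0
    have hdomu : (↑u : lp (fun _ : V => ℂ) 2) ∈ T.closure.domain := by
      rw [hueq, ← hy1']; exact y.2
    have hyu : (⟨(↑u : lp (fun _ : V => ℂ) 2), hdomu⟩ : T.closure.domain) = y :=
      Subtype.ext (by rw [hueq, hy1'])
    refine ⟨hdomu, ?_⟩
    rw [hyu, hy2', ← hueq]
    exact (eq_sub_of_add_eq hzdef.symm).symm
  have hle2 : T.adjoint ≤ T.closure := by
    refine ⟨fun a ha => ?_, fun x yy hxy => ?_⟩
    · obtain ⟨hd, _⟩ := claim ⟨a, ha⟩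
      exact hd
    · obtain ⟨hd, hval⟩ := claim x
      have hyy : yy = ⟨(↑x : lp (fun _ : V => ℂ) 2), hd⟩ := Subtype.ext hxy.symm
      rw [hyy]
      exact hval.symm
  exact le_antisymm hle2 hclose_le
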